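/- Let R be a noetherian commutative domain with field of fractions Q, let G be a group acting on R by ring automorphisms, and let F ⊆ G be a finite subset. Let M be an R-bimodule which is generated as an R-bimodule by finitely many elements, is flat as a right R-module, and whose base change M ⊗_R Q admits a direct sum decomposition M ⊗_R Q = ⊕_{w∈F} M_w into additive subgroups, each stable under the left R-action and the right Q-action, such that for every w ∈ F, n ∈ M_w and r ∈ R one has n·r = (w·r)·n. Then M is finitely generated as a left R-module and finitely generated as a right R-module. -/

import Mathlib

open TensorProduct

set_option maxHeartbeats 1000000

section Aux

variable {R : Type*} [CommSemiring R] {M : Type*} [AddCommGroup M] [Module R M]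

/-- Type synonym equipping `M` with the left module structure given by a ring hom `α` into
endomorphisms. -/
def Lft (_α : R →+* Module.End R M) : Type _ := M

instance (α : R →+* Module.End R M) : AddCommGroup (Lft α) :=
  inferInstanceAs (AddCommGroup M)

instance (α : R →+* Module.End R M) : Module R (Lft α) where
  smul r x := α r x
  one_smul x := by show α 1 x = x; rw [map_one]; rfl
  mul_smul r s x := by show α (r * s) x = α r (α s x); rw [map_mul]; rfl
  smul_zero r := map_zero (α r)
  smul_add r x y := map_add (α r) x y
  add_smul r s x := by show α (r + s) x = α r x + α s x; rw [map_add]; rfl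
  zero_smul x := by show α 0 x = 0; rw [map_zero]; rfl

theorem Lft.smul_def (α : R →+* Module.End R M) (r : R) (x : Lft α) :
    r • x = α r x := rfl

/-- The ring hom `r ↦ lTensor Q (α r)`. -/
noncomputable def lTensorEnd (Q : Type*) [AddCommMonoid Q] [Module R Q] (α : R →+* Module.End R M) :
    R →+* Module.End R (Q ⊗[R] M) where
  toFun r := LinearMap.lTensor Q (α r)
  map_one' := by
    show LinearMap.lTensor Q (α 1) = 1
    rw [map_one, Module.End.one_eq_id, LinearMap.lTensor_id]
    rfl
  map_mul' r s := by
    show LinearMap.lTensor Q (α (r * s)) = LinearMap.lTensor Q (α r) * LinearMap.lTensor Q (α s)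
    rw [map_mul, Module.End.mul_eq_comp, LinearMap.lTensor_comp]
    rfl
  map_zero' := by
    show LinearMap.lTensor Q (α 0) = 0
    rw [map_zero]
    exact LinearMap.lTensor_zero Q
  map_add' r s := by
    show LinearMap.lTensor Q (α (r + s)) = LinearMap.lTensor Q (α r) + LinearMap.lTensor Q (α s)
    rw [map_add]
    exact LinearMap.lTensor_add Q (α r) (α s)

end Aux

/-!
Statement 9: see original docstring.
-/

theorem bimodule_fg_left_and_right
    {R : Type*} [CommRing R] [IsDomain R] [IsNoetherianRing R]
    {G : Type*} [Group G] [MulSemiringAction G R] (F : Finset G)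
    {M : Type*} [AddCommGroup M] [Module R M] [Module.Flat R M]
    (α : R →+* Module.End R M)
    (s : Finset M)
    (hgen : ∀ P : Submodule R M, (∀ r : R, ∀ x ∈ P, α r x ∈ P) → (↑s : Set M) ⊆ P → P = ⊤)
    (N : G → Submodule (FractionRing R) (FractionRing R ⊗[R] M))
    (hstab : ∀ w ∈ F, ∀ r : R, ∀ x ∈ N w,
      LinearMap.lTensor (FractionRing R) (α r) x ∈ N w)
    (hint : letI := Classical.decEq G; DirectSum.IsInternal (fun w : F => N w))
    (hwt : ∀ w ∈ F, ∀ x ∈ N w, ∀ r : R,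
      (algebraMap R (FractionRing R) r) • x = LinearMap.lTensor (FractionRing R) (α (w • r)) x) :
    (∃ t : Finset M, Submodule.span R (↑t : Set M) = ⊤) ∧
    (∃ t : Finset M, AddSubgroup.closure {y : M | ∃ r : R, ∃ x ∈ t, α r x = y} = ⊤) := by
  classical
  -- the embedding of `M` into the base change
  let ι : M →ₗ[R] FractionRing R ⊗[R] M :=
    (LinearMap.rTensor M (Algebra.linearMap R (FractionRing R))) ∘ₗ
      (TensorProduct.lid R M).symm.toLinearMap
  have hι : ∀ x : M, ι x = (1 : FractionRing R) ⊗ₜ[R] x := by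
    intro x
    show LinearMap.rTensor M (Algebra.linearMap R (FractionRing R))
        ((TensorProduct.lid R M).symm x) = _
    rw [TensorProduct.lid_symm_apply, LinearMap.rTensor_tmul, Algebra.linearMap_apply, map_one]
  have hιinj : Function.Injective ι := by
    have h1 : Function.Injective ⇑(Algebra.linearMap R (FractionRing R)) :=
      IsFractionRing.injective R (FractionRing R)
    exact (Module.Flat.rTensor_preserves_injective_linearMap (M := M) _ h1).comp
      (TensorProduct.lid R M).symm.injective
  -- the left action on the base change
  let β : R →+* Module.End R (FractionRing R ⊗[R] M) := lTensorEnd (FractionRing R) α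
  have hβ : ∀ (r : R) (x : FractionRing R ⊗[R] M),
      β r x = LinearMap.lTensor (FractionRing R) (α r) x := fun _ _ => rfl
  have hιβ : ∀ (r : R) (x : M), ι (α r x) = β r (ι x) := by
    intro r x
    rw [hι, hι, hβ, LinearMap.lTensor_tmul]
  -- twisting between left and right actions on each piece
  have htw' : ∀ w ∈ F, ∀ x ∈ N w, ∀ r : R,
      (r • x : FractionRing R ⊗[R] M) = β (w • r) x := by
    intro w hw x hx r
    rw [hβ, ← hwt w hw x hx r, algebraMap_smul]
  have htw : ∀ w ∈ F, ∀ x ∈ N w, ∀ r : R, β r x = (w⁻¹ • r) • x := by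
    intro w hw x hx r
    have h := htw' w hw x hx (w⁻¹ • r)
    rw [smul_inv_smul] at h
    exact h.symm
  -- decomposition of elements into components
  have hsup : (⨆ w : F, N ↑w) = ⊤ := by
    letI := Classical.decEq G
    exact hint.submodule_iSup_eq_top
  have hdecomp : ∀ x : FractionRing R ⊗[R] M, ∃ f : {w // w ∈ F} →₀ FractionRing R ⊗[R] M,
      (∀ w : {w // w ∈ F}, f w ∈ N ↑w) ∧ (f.sum fun _ y => y) = x := by
    intro x
    have hx : x ∈ ⨆ w : F, N ↑w := hsup ▸ Submodule.mem_top
    exact (Submodule.mem_iSup_iff_exists_finsupp _ x).1 hx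
  choose c hc1 hc2 using fun m : M => hdecomp (ι m)
  -- the finitely generated right submodules spanned by components
  let T : F → Set (FractionRing R ⊗[R] M) := fun w => (fun m => c m w) '' ↑s
  let P : F → Submodule R (FractionRing R ⊗[R] M) := fun w => Submodule.span R (T w)
  have hTN : ∀ w : F, T w ⊆ (N ↑w : Set (FractionRing R ⊗[R] M)) := by
    rintro w _ ⟨m, hm, rfl⟩
    exact hc1 m w
  have hPN : ∀ (w : F) (x : FractionRing R ⊗[R] M), x ∈ P w → x ∈ N ↑w := by
    intro w x hx
    have h : P w ≤ (N ↑w).restrictScalars R := Submodule.span_le.2 (hTN w)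
    exact h hx
  have hβP : ∀ (r : R) (w : F) (x : FractionRing R ⊗[R] M), x ∈ P w → β r x ∈ P w := by
    intro r w x hx
    induction hx using Submodule.span_induction with
    | mem y hy =>
        rw [htw ↑w w.2 y (hTN w hy) r]
        exact Submodule.smul_mem _ _ (Submodule.subset_span hy)
    | zero => rw [map_zero]; exact Submodule.zero_mem _
    | add y z _ _ hy hz => rw [map_add]; exact Submodule.add_mem _ hy hz
    | smul a y _ hy => rw [map_smul]; exact Submodule.smul_mem _ _ hy
  let PT : Submodule R (FractionRing R ⊗[R] M) := ⨆ w : F, P w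
  have hβPT : ∀ (r : R) (x : FractionRing R ⊗[R] M), x ∈ PT → β r x ∈ PT := by
    intro r x hx
    refine Submodule.iSup_induction (motive := fun y => β r y ∈ PT) P hx ?_ ?_ ?_
    · intro w y hy
      exact Submodule.mem_iSup_of_mem w (hβP r w y hy)
    · show β r 0 ∈ PT
      rw [map_zero]; exact Submodule.zero_mem _
    · intro y z hy hz
      show β r (y + z) ∈ PT
      rw [map_add]; exact Submodule.add_mem _ hy hz
  have hsPT : ∀ m ∈ s, ι m ∈ PT := by
    intro m hm
    rw [← hc2 m]
    refine Submodule.sum_mem _ ?_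
    intro w _
    exact Submodule.mem_iSup_of_mem w (Submodule.subset_span ⟨m, hm, rfl⟩)
  -- the whole of `M` lands in `PT`
  have hcom : Submodule.comap ι PT = ⊤ := by
    refine hgen _ ?_ ?_
    · intro r x hx
      simp only [Submodule.mem_comap] at hx ⊢
      rw [hιβ]
      exact hβPT r _ hx
    · intro m hm
      exact Submodule.mem_comap.2 (hsPT m (by exact_mod_cast hm))
  have hall : ∀ x : M, ι x ∈ PT := by
    intro x
    have hx : x ∈ Submodule.comap ι PT := hcom ▸ Submodule.mem_top
    exact hx
  -- finite generation facts for PT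
  have hPfg : ∀ w : F, (P w).FG := by
    intro w
    exact ⟨s.image (fun m => c m w), by rw [Finset.coe_image]⟩
  have hPTfg : PT.FG := by
    have hPT : PT = Submodule.span R (⋃ w : F, T w) := by
      rw [Submodule.span_iUnion]
    rw [hPT]
    have hfin : (⋃ w : F, T w).Finite :=
      Set.finite_iUnion (fun w => (s.finite_toSet.image _))
    exact ⟨hfin.toFinset, by rw [Set.Finite.coe_toFinset]⟩
  haveI hNoePT : IsNoetherian R ↥PT := isNoetherian_of_fg_of_noetherian PT hPTfg
  -- Part 1: right finite generation
  have hrange_le : LinearMap.range ι ≤ PT := by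
    rintro _ ⟨x, rfl⟩
    exact hall x
  have hrangefg : (LinearMap.range ι).FG := by
    have h1 : (Submodule.comap PT.subtype (LinearMap.range ι)).FG := IsNoetherian.noetherian _
    have h2 := h1.map PT.subtype
    rwa [Submodule.map_comap_subtype, inf_eq_right.2 hrange_le] at h2
  obtain ⟨S, hS⟩ := hrangefg
  have hSmem : ∀ y ∈ S, ∃ x : M, ι x = y := by
    intro y hy
    have hy' : y ∈ LinearMap.range ι := hS ▸ Submodule.subset_span hy
    exact hy'
  choose g hg using hSmem
  let t1 : Finset M := S.attach.image (fun y => g y.1 y.2)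
  have himg : ⇑ι '' ↑t1 = ↑S := by
    apply Set.Subset.antisymm
    · rintro _ ⟨x, hx, rfl⟩
      obtain ⟨y, -, rfl⟩ := Finset.mem_image.1 (Finset.mem_coe.1 hx)
      rw [hg y.1 y.2]
      exact y.2
    · intro z hz
      have hz' : z ∈ S := Finset.mem_coe.1 hz
      refine ⟨g z hz', ?_, hg z hz'⟩
      exact Finset.mem_coe.2 (Finset.mem_image.2 ⟨⟨z, hz'⟩, Finset.mem_attach _ _, rfl⟩)
  have hfirst : Submodule.span R (↑t1 : Set M) = ⊤ := by
    apply Submodule.map_injective_of_injective hιinj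
    rw [Submodule.map_span, himg, hS, LinearMap.range_eq_map]
  refine ⟨⟨t1, hfirst⟩, ?_⟩
  -- Part 2: left finite generation
  let ι₂ : Lft α →ₗ[R] Lft β :=
    { toFun := fun x => ι x
      map_add' := fun x y => ι.map_add x y
      map_smul' := fun r x => hιβ r x }
  have hι₂inj : Function.Injective ι₂ := hιinj
  let P₂ : F → Submodule R (Lft β) := fun w =>
    { carrier := (P w : Set (FractionRing R ⊗[R] M))
      add_mem' := fun hx hy => (P w).add_mem hx hy
      zero_mem' := (P w).zero_mem
      smul_mem' := fun r x hx => hβP r w x hx }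
  haveI hNoeP₂ : ∀ w : F, IsNoetherian R ↥(P₂ w) := by
    intro w
    constructor
    intro Ssub
    apply Submodule.fg_of_fg_map_injective (P₂ w).subtype Subtype.val_injective
    set D : Submodule R (Lft β) := Submodule.map (P₂ w).subtype Ssub with hD
    have hDP : ∀ x : FractionRing R ⊗[R] M, x ∈ D → x ∈ P w := by
      rintro _ ⟨y, -, rfl⟩
      exact y.2
    let D' : Submodule R (FractionRing R ⊗[R] M) :=
      { carrier := (D : Set (Lft β))
        add_mem' := fun hx hy => D.add_mem hx hy
        zero_mem' := D.zero_mem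
        smul_mem' := by
          intro r x hx
          have hxN : x ∈ N ↑w := hPN w x (hDP x hx)
          rw [htw' ↑w w.2 x hxN r]
          have h2 := D.smul_mem ((w : G) • r) hx
          rw [Lft.smul_def β ((w : G) • r) x] at h2
          exact h2 }
    have hD'le : D' ≤ P w := fun x hx => hDP x hx
    haveI : IsNoetherian R ↥(P w) := isNoetherian_of_fg_of_noetherian _ (hPfg w)
    have hD'fg : D'.FG := by
      have h1 : (Submodule.comap (P w).subtype D').FG := IsNoetherian.noetherian _
      have h2 := h1.map (P w).subtype
      rwa [Submodule.map_comap_subtype, inf_eq_right.2 hD'le] at h2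
    obtain ⟨S', hS'⟩ := hD'fg
    have hich : D = Submodule.span R (show Set (Lft β) from (↑S' : Set (FractionRing R ⊗[R] M))) := by
      apply le_antisymm
      · intro x hx
        have hx' : x ∈ Submodule.span R (↑S' : Set (FractionRing R ⊗[R] M)) := by
          rw [hS']
          exact hx
        clear hx
        induction hx' using Submodule.span_induction with
        | mem y hy => exact Submodule.subset_span hy
        | zero => exact Submodule.zero_mem _
        | add y z _ _ ihy ihz => exact Submodule.add_mem _ ihy ihz
        | smul a y hy ihy =>
            have hyD' : y ∈ D' := by rw [← hS']; exact hy
            have hyN : y ∈ N ↑w := hPN w y (hD'le hyD')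
            have e : a • (@id (FractionRing R ⊗[R] M) y) = β ((w : G) • a) y := htw' ↑w w.2 y hyN a
            refine (congrArg (fun z : FractionRing R ⊗[R] M => (z : Lft β) ∈ Submodule.span R (show Set (Lft β) from (↑S' : Set (FractionRing R ⊗[R] M)))) e).mpr ?_
            have h2 := Submodule.smul_mem
              (Submodule.span R (show Set (Lft β) from (↑S' : Set (FractionRing R ⊗[R] M)))) ((w : G) • a) ihy
            rw [Lft.smul_def β ((w : G) • a) y] at h2
            exact h2
      · rw [Submodule.span_le]
        intro y hy
        have hy' : y ∈ D' := by
          rw [← hS']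
          exact Submodule.subset_span hy
        show y ∈ (D : Set (Lft β))
        exact hy'
    exact ⟨S', hich.symm⟩
  let PT₂ : Submodule R (Lft β) := ⨆ w : F, P₂ w
  have hPT_le : ∀ x : FractionRing R ⊗[R] M, x ∈ PT → x ∈ PT₂ := by
    intro x hx
    refine Submodule.iSup_induction (motive := fun y => y ∈ PT₂) P hx ?_ ?_ ?_
    · intro w y hy
      have hy2 : y ∈ P₂ w := hy
      exact Submodule.mem_iSup_of_mem (p := P₂) w hy2
    · exact Submodule.zero_mem _
    · intro y z hy hz
      exact Submodule.add_mem _ hy hz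
  let fsum : ((w : F) → ↥(P₂ w)) →ₗ[R] Lft β :=
    { toFun := fun v => ∑ w : F, ((v w : Lft β))
      map_add' := by
        intro a b
        simp [Finset.sum_add_distrib]
      map_smul' := by
        intro r a
        simp [Finset.smul_sum] }
  have hfsum_range : LinearMap.range fsum = PT₂ := by
    apply le_antisymm
    · rintro _ ⟨v, rfl⟩
      exact Submodule.sum_mem _ (fun w _ => Submodule.mem_iSup_of_mem w (v w).2)
    · refine iSup_le ?_
      intro w x hx
      refine ⟨Pi.single w ⟨x, hx⟩, ?_⟩
      show (∑ w' : F, (↑(Pi.single (M := fun w' : F => ↥(P₂ w')) w ⟨x, hx⟩ w') : Lft β)) = x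
      rw [Finset.sum_eq_single w]
      · rw [Pi.single_eq_same]
      · intro w' _ hne
        rw [Pi.single_eq_of_ne hne]
        rfl
      · intro h
        exact absurd (Finset.mem_univ w) h
  haveI hNoePT₂ : IsNoetherian R ↥PT₂ := by
    refine isNoetherian_of_surjective (fsum.codRestrict PT₂ ?_) ?_
    · intro v
      exact hfsum_range ▸ LinearMap.mem_range_self fsum v
    · rw [LinearMap.range_codRestrict, hfsum_range, Submodule.comap_subtype_self]
  have hrange₂_le : LinearMap.range ι₂ ≤ PT₂ := by
    rintro _ ⟨x, rfl⟩
    exact hPT_le _ (hall x)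
  have hrange₂fg : (LinearMap.range ι₂).FG := by
    have h1 : (Submodule.comap PT₂.subtype (LinearMap.range ι₂)).FG := IsNoetherian.noetherian _
    have h2 := h1.map PT₂.subtype
    rwa [Submodule.map_comap_subtype, inf_eq_right.2 hrange₂_le] at h2
  obtain ⟨S₂, hS₂⟩ := hrange₂fg
  have hS₂mem : ∀ y ∈ S₂, ∃ x : M, ι₂ x = y := by
    intro y hy
    have hy' : y ∈ LinearMap.range ι₂ := hS₂ ▸ Submodule.subset_span hy
    exact hy'
  choose g₂ hg₂ using hS₂mem
  let t2 : Finset M := S₂.attach.image (fun y => g₂ y.1 y.2)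
  have himg₂ : ⇑ι₂ '' (show Set (Lft α) from (↑t2 : Set M)) = ↑S₂ := by
    apply Set.Subset.antisymm
    · rintro _ ⟨x, hx, rfl⟩
      obtain ⟨y, -, rfl⟩ := Finset.mem_image.1 (Finset.mem_coe.1 hx)
      rw [hg₂ y.1 y.2]
      exact y.2
    · intro z hz
      have hz' : z ∈ S₂ := Finset.mem_coe.1 hz
      refine ⟨g₂ z hz', ?_, hg₂ z hz'⟩
      exact Finset.mem_coe.2 (Finset.mem_image.2 ⟨⟨z, hz'⟩, Finset.mem_attach _ _, rfl⟩)
  have hspan₂ : Submodule.span R (show Set (Lft α) from (↑t2 : Set M)) = ⊤ := by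
    apply Submodule.map_injective_of_injective hι₂inj
    rw [Submodule.map_span, himg₂, hS₂, LinearMap.range_eq_map]
  refine ⟨t2, ?_⟩
  rw [AddSubgroup.eq_top_iff']
  intro m
  have hKα : ∀ (r : R) (y : M),
      y ∈ AddSubgroup.closure {y : M | ∃ r : R, ∃ x ∈ t2, α r x = y} →
      α r y ∈ AddSubgroup.closure {y : M | ∃ r : R, ∃ x ∈ t2, α r x = y} := by
    intro r y hy
    induction hy using AddSubgroup.closure_induction with
    | mem z hz =>
        obtain ⟨r', x, hx, rfl⟩ := hz
        refine AddSubgroup.subset_closure ⟨r * r', x, hx, ?_⟩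
        rw [map_mul]
        rfl
    | zero => rw [map_zero]; exact AddSubgroup.zero_mem _
    | add y z _ _ ihy ihz => rw [map_add]; exact AddSubgroup.add_mem _ ihy ihz
    | neg y _ ihy => rw [map_neg]; exact AddSubgroup.neg_mem _ ihy
  have hm : m ∈ Submodule.span R (show Set (Lft α) from (↑t2 : Set M)) := by
    rw [hspan₂]
    exact @Submodule.mem_top R (Lft α) _ _ _ m
  induction hm using Submodule.span_induction with
  | mem x hx =>
      refine AddSubgroup.subset_closure ⟨1, x, Finset.mem_coe.1 hx, ?_⟩
      rw [map_one]
      rfl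
  | zero => exact AddSubgroup.zero_mem _
  | add x y _ _ ihx ihy => exact AddSubgroup.add_mem _ ihx ihy
  | smul a x _ ihx =>
      show α a x ∈ _
      exact hKα a x ihx
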